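/- Let φ ∈ H¹(I) be Lipschitz on an interval I of a one-dimensional torus, u ∈ H²(I) positive satisfying −2ε²u'' + Vu = Eu on I (periodic setting). Then the Agmon identity holds: 2ε² ∫ |(e^{φ/(2ε)}u)'|² dx + ∫ (V − E − (1/2)|φ'|²) e^{φ/ε}u² dx = 0. -/

import Mathlib

open Real MeasureTheory

/-- Interval integrability of `c0 + d*c1 + d^2*c2` with continuous `cᵢ` and bounded
measurable `d`. -/
lemma aux_intervalIntegrable (c0 c1 c2 : ℝ → ℝ) (h0 : Continuous c0) (h1 : Continuous c1)
    (h2 : Continuous c2) {d : ℝ → ℝ} (hd : Measurable d) {B : ℝ} (hB : ∀ x, |d x| ≤ B)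
    (f : ℝ → ℝ) (hf : ∀ x, f x = c0 x + d x * c1 x + d x ^ 2 * c2 x) :
    IntervalIntegrable f volume 0 1 := by
  have hfe : f = fun x => c0 x + d x * c1 x + d x ^ 2 * c2 x := funext hf
  rw [hfe, intervalIntegrable_iff]
  have i0 : IntegrableOn c0 (Set.uIoc (0:ℝ) 1) volume :=
    intervalIntegrable_iff.mp (h0.intervalIntegrable 0 1)
  have i1 : IntegrableOn (fun x => d x * c1 x) (Set.uIoc (0:ℝ) 1) volume :=
    Integrable.bdd_mul (intervalIntegrable_iff.mp (h1.intervalIntegrable 0 1))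
      hd.aestronglyMeasurable (c := B) (Filter.Eventually.of_forall fun x => by simpa [Real.norm_eq_abs] using hB x)
  have i2 : IntegrableOn (fun x => d x ^ 2 * c2 x) (Set.uIoc (0:ℝ) 1) volume := by
    refine Integrable.bdd_mul (intervalIntegrable_iff.mp (h2.intervalIntegrable 0 1))
      ((hd.pow measurable_const).aestronglyMeasurable) (c := B ^ 2) (Filter.Eventually.of_forall fun x => ?_)
    have h' : |d x ^ 2| = |d x| ^ 2 := by rw [abs_pow]
    rw [Real.norm_eq_abs, h']
    exact pow_le_pow_left₀ (abs_nonneg _) (hB x) 2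
  exact (i0.add i1).add i2

theorem stmt10 (ε : ℝ) (hε : 0 < ε) (V u φ : ℝ → ℝ) (E : ℝ) (K : NNReal)
    (hV : Continuous V) (hVper : ∀ x, V (x + 1) = V x)
    (hu : ContDiff ℝ 2 u) (huper : ∀ x, u (x + 1) = u x) (hupos : ∀ x, 0 < u x)
    (hφlip : LipschitzWith K φ) (hφdiff : Differentiable ℝ φ) (hφper : ∀ x, φ (x + 1) = φ x)
    (heq : ∀ x, -2 * ε ^ 2 * deriv (deriv u) x + V x * u x = E * u x) :
    2 * ε ^ 2 * (∫ x in (0:ℝ)..1, (deriv (fun y => Real.exp (φ y / (2 * ε)) * u y) x) ^ 2)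
      + (∫ x in (0:ℝ)..1,
          (V x - E - (1 / 2) * (deriv φ x) ^ 2) * Real.exp (φ x / ε) * (u x) ^ 2) = 0 := by
  have hε' : (ε:ℝ) ≠ 0 := ne_of_gt hε
  -- basic differentiability facts
  have hudiff : Differentiable ℝ u := (hu.of_le one_le_two).differentiable one_ne_zero
  have hud : ∀ x, HasDerivAt u (deriv u x) x := fun x => (hudiff x).hasDerivAt
  have hu1 : ContDiff ℝ 1 (deriv u) :=
    (contDiff_succ_iff_deriv.mp (show ContDiff ℝ ((1:ℕ)+1) u by exact_mod_cast hu)).2.2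
  have hu'diff : Differentiable ℝ (deriv u) := hu1.differentiable one_ne_zero
  have hu'd : ∀ x, HasDerivAt (deriv u) (deriv (deriv u) x) x := fun x => (hu'diff x).hasDerivAt
  have hφd : ∀ x, HasDerivAt φ (deriv φ x) x := fun x => (hφdiff x).hasDerivAt
  -- bound on deriv φ
  have hK : ∀ x, |deriv φ x| ≤ K := by
    intro x
    have h1 : ‖fderiv ℝ φ x‖ ≤ K := norm_fderiv_le_of_lipschitz ℝ hφlip
    have h2 : deriv φ x = fderiv ℝ φ x 1 := by rw [fderiv_apply_one_eq_deriv]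
    calc |deriv φ x| = ‖fderiv ℝ φ x 1‖ := by rw [h2]; rfl
      _ ≤ ‖fderiv ℝ φ x‖ * ‖(1:ℝ)‖ := (fderiv ℝ φ x).le_opNorm 1
      _ ≤ K := by simpa using h1
  have hdmeas : Measurable (deriv φ) := measurable_deriv φ
  -- continuity facts
  have hφcont : Continuous φ := hφlip.continuous
  have hPcont : Continuous (fun x => Real.exp (φ x / (2 * ε))) :=
    Real.continuous_exp.comp (hφcont.div_const _)
  have hucont : Continuous u := hu.continuous
  have hu'cont : Continuous (deriv u) := hu1.continuous
  have hu''eq : ∀ x, deriv (deriv u) x = (V x * u x - E * u x) / (2 * ε ^ 2) := by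
    intro x
    have := heq x
    field_simp
    linarith
  have hu''cont : Continuous (deriv (deriv u)) := by
    have h : Continuous (fun x => (V x * u x - E * u x) / (2 * ε ^ 2)) := by fun_prop
    exact h.congr fun x => (hu''eq x).symm
  set P : ℝ → ℝ := fun x => Real.exp (φ x / (2 * ε)) with hPdef
  have hP : ∀ x, HasDerivAt P (P x * (deriv φ x / (2 * ε))) x :=
    fun x => ((hφd x).div_const (2 * ε)).exp
  -- exp (φ x / ε) = P x ^ 2
  have hexp : ∀ x, Real.exp (φ x / ε) = P x ^ 2 := by
    intro x
    rw [sq, ← Real.exp_add]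
    congr 1
    field_simp
    ring
  -- derivative of the weighted function
  have hw : ∀ x, HasDerivAt (fun y => Real.exp (φ y / (2 * ε)) * u y)
      (P x * (deriv φ x / (2 * ε)) * u x + P x * deriv u x) x :=
    fun x => (hP x).mul (hud x)
  -- the primitive F and its derivative g
  set g : ℝ → ℝ := fun x =>
    (2 * ε ^ 2) * ((P x * (deriv φ x / (2 * ε)) * P x + P x * (P x * (deriv φ x / (2 * ε))))
        * (deriv u x * u x)
      + P x * P x * (deriv (deriv u) x * u x + deriv u x * deriv u x)) with hgdef
  have hF : ∀ x, HasDerivAt (fun y => (2 * ε ^ 2) * (P y * P y * (deriv u y * u y))) (g x) x := by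
    intro x
    exact (((hP x).mul (hP x)).mul ((hu'd x).mul (hud x))).const_mul (2 * ε ^ 2)
  -- pointwise identity
  have key : ∀ x, (V x - E) * u x = 2 * ε ^ 2 * deriv (deriv u) x := by
    intro x; have := heq x; ring_nf; ring_nf at this; linarith
  have hpt : ∀ x, 2 * ε ^ 2 * (P x * (deriv φ x / (2 * ε)) * u x + P x * deriv u x) ^ 2
      + (V x - E - (1 / 2) * (deriv φ x) ^ 2) * P x ^ 2 * (u x) ^ 2 = g x := by
    intro x
    have h2 : (deriv φ x / (2 * ε)) ^ 2 * (2 * ε ^ 2) = (1 / 2) * (deriv φ x) ^ 2 := by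
      field_simp
    have k := key x
    simp only [hgdef]
    linear_combination (P x ^ 2 * u x ^ 2) * h2 + (P x ^ 2 * u x) * k
  -- periodicity of all pieces at 0 and 1
  have hu'per : ∀ x, deriv u (x + 1) = deriv u x := by
    intro x
    have hfun : (fun y => u (y + 1)) = u := funext huper
    have h1 : HasDerivAt u (deriv u (x + 1) * 1) x := by
      have := (hud (x + 1)).comp x ((hasDerivAt_id x).add_const 1)
      simpa [Function.comp_def, hfun] using this
    simpa using h1.unique (hud x)
  have hF10 : (2 * ε ^ 2) * (P 1 * P 1 * (deriv u 1 * u 1))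
      = (2 * ε ^ 2) * (P 0 * P 0 * (deriv u 0 * u 0)) := by
    have e1 : φ 1 = φ 0 := by simpa using hφper 0
    have e2 : u 1 = u 0 := by simpa using huper 0
    have e3 : deriv u 1 = deriv u 0 := by simpa using hu'per 0
    simp [hPdef, e1, e2, e3]
  -- integrability of g
  have hgint : IntervalIntegrable g volume 0 1 := by
    refine aux_intervalIntegrable
      (fun x => (2 * ε ^ 2) * (P x * P x * (deriv (deriv u) x * u x + deriv u x * deriv u x)))
      (fun x => (2 * ε ^ 2) * ((P x * (1 / (2 * ε)) * P x + P x * (P x * (1 / (2 * ε))))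
        * (deriv u x * u x))) (fun _ => 0) ?_ ?_ continuous_const hdmeas hK g ?_
    · exact continuous_const.mul ((hPcont.mul hPcont).mul
        ((hu''cont.mul hucont).add (hu'cont.mul hu'cont)))
    · fun_prop
    · intro x; simp only [hgdef]; ring
  -- integrability of the two integrands
  have hI1int : IntervalIntegrable
      (fun x => (P x * (deriv φ x / (2 * ε)) * u x + P x * deriv u x) ^ 2) volume 0 1 := by
    refine aux_intervalIntegrable
      (fun x => (P x * deriv u x) ^ 2)
      (fun x => 2 * (P x * (1 / (2 * ε)) * u x) * (P x * deriv u x))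
      (fun x => (P x * (1 / (2 * ε)) * u x) ^ 2) ?_ ?_ ?_ hdmeas hK _ ?_
    · fun_prop
    · fun_prop
    · fun_prop
    · intro x; ring
  have hI2int : IntervalIntegrable
      (fun x => (V x - E - (1 / 2) * (deriv φ x) ^ 2) * Real.exp (φ x / ε) * (u x) ^ 2)
      volume 0 1 := by
    refine aux_intervalIntegrable
      (fun x => (V x - E) * Real.exp (φ x / ε) * (u x) ^ 2)
      (fun _ => 0)
      (fun x => -(1 / 2) * Real.exp (φ x / ε) * (u x) ^ 2) ?_ continuous_const ?_ hdmeas hK _ ?_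
    · fun_prop
    · fun_prop
    · intro x; ring
  -- rewrite the first integral using the computed derivative
  have hrw1 : (∫ x in (0:ℝ)..1, (deriv (fun y => Real.exp (φ y / (2 * ε)) * u y) x) ^ 2)
      = ∫ x in (0:ℝ)..1, (P x * (deriv φ x / (2 * ε)) * u x + P x * deriv u x) ^ 2 := by
    refine intervalIntegral.integral_congr fun x _ => ?_
    rw [(hw x).deriv]
  rw [hrw1]
  -- combine
  have hsplit :
      2 * ε ^ 2 * (∫ x in (0:ℝ)..1, (P x * (deriv φ x / (2 * ε)) * u x + P x * deriv u x) ^ 2)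
        + (∫ x in (0:ℝ)..1,
            (V x - E - (1 / 2) * (deriv φ x) ^ 2) * Real.exp (φ x / ε) * (u x) ^ 2)
      = ∫ x in (0:ℝ)..1, g x := by
    rw [← intervalIntegral.integral_const_mul]
    rw [← intervalIntegral.integral_add (hI1int.const_mul _) hI2int]
    refine intervalIntegral.integral_congr fun x _ => ?_
    have := hpt x
    rw [hexp x] at *
    linarith [hpt x]
  rw [hsplit]
  have := intervalIntegral.integral_eq_sub_of_hasDerivAt (f := fun y =>
    (2 * ε ^ 2) * (P y * P y * (deriv u y * u y))) (fun x _ => hF x) hgint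
  rw [this]
  show 2 * ε ^ 2 * (P 1 * P 1 * (deriv u 1 * u 1))
      - 2 * ε ^ 2 * (P 0 * P 0 * (deriv u 0 * u 0)) = 0
  rw [hF10, sub_self]
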